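/- arXiv:2006.04697 — 4 statements merged into one kernel-verified Lean document; each statement's English description precedes it below -/
import Mathlib

section
/- Let d be a positive integer and W a d×d real matrix. The linear map x ↦ W x from ℝ^d to ℝ^d is permutation equivariant — that is, W P = P W for every d×d permutation matrix P — if and only if there exist real numbers λ and γ such that W = λ I + γ 11ᵀ, where I is the d×d identity matrix and 11ᵀ is the d×d all-ones matrix. -/
open Matrix

/-- The `d × d` permutation matrix of a permutation `π`, with `P i j = 1` iff `i = π j`. -/
noncomputable def permMat (d : ℕ) (π : Equiv.Perm (Fin d)) : Matrix (Fin d) (Fin d) ℝ :=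
  Matrix.of fun i j => if i = π j then (1 : ℝ) else 0

/-- The `d × d` all-ones matrix `11ᵀ`. -/
noncomputable def onesMat (d : ℕ) : Matrix (Fin d) (Fin d) ℝ :=
  Matrix.of fun _ _ => (1 : ℝ)

lemma mul_permMat (d : ℕ) (π : Equiv.Perm (Fin d)) (W : Matrix (Fin d) (Fin d) ℝ)
    (i j : Fin d) : (W * permMat d π) i j = W i (π j) := by
  simp [Matrix.mul_apply, permMat, eq_comm]

lemma permMat_mul (d : ℕ) (π : Equiv.Perm (Fin d)) (W : Matrix (Fin d) (Fin d) ℝ)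
    (i j : Fin d) : (permMat d π * W) i j = W (π.symm i) j := by
  have : ∀ k : Fin d, (i = π k) = (k = π.symm i) := by
    intro k; simp [Equiv.eq_symm_apply, eq_comm]
  simp [Matrix.mul_apply, permMat, this]

lemma exists_perm_two (d : ℕ) {i j k l : Fin d} (hij : i ≠ j) (hkl : k ≠ l) :
    ∃ π : Equiv.Perm (Fin d), π i = k ∧ π j = l := by
  set σ := Equiv.swap i k with hσ
  have hσi : σ i = k := Equiv.swap_apply_left i k
  set j' := σ j with hj'
  have hj'k : j' ≠ k := by
    intro h
    exact hij (σ.injective (by rw [← hj', h, hσi]))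
  refine ⟨σ.trans (Equiv.swap j' l), ?_, ?_⟩
  · simp only [Equiv.trans_apply, hσi]
    exact Equiv.swap_apply_of_ne_of_ne hj'k.symm hkl
  · simp only [Equiv.trans_apply, ← hj']
    exact Equiv.swap_apply_left j' l

/-- A linear layer `x ↦ W x` on `ℝ^d` is permutation equivariant (i.e. `W P = P W` for every
permutation matrix `P`) iff `W = λ I + γ 11ᵀ` for some reals `λ, γ`. -/
theorem stmt_0 (d : ℕ) (hd : 0 < d) (W : Matrix (Fin d) (Fin d) ℝ) :
    (∀ π : Equiv.Perm (Fin d), W * permMat d π = permMat d π * W) ↔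
      ∃ lam gam : ℝ,
        W = lam • (1 : Matrix (Fin d) (Fin d) ℝ) + gam • onesMat d := by
  constructor
  · intro h
    have key : ∀ (π : Equiv.Perm (Fin d)) (i j : Fin d), W (π i) (π j) = W i j := by
      intro π i j
      have := congrFun (congrFun (h π) (π i)) j
      rw [mul_permMat, permMat_mul] at this
      simpa using this
    -- diagonal entries are all equal
    have hdiag : ∀ i j : Fin d, W i i = W j j := by
      intro i j
      have := key (Equiv.swap i j) i i
      simpa using this.symm
    -- off-diagonal entries are all equal
    have hoff : ∀ i j k l : Fin d, i ≠ j → k ≠ l → W i j = W k l := by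
      intro i j k l hij hkl
      obtain ⟨π, h1, h2⟩ := exists_perm_two d hij hkl
      have := key π i j
      rw [h1, h2] at this
      exact this.symm
    set i0 : Fin d := ⟨0, hd⟩ with hi0
    by_cases h1 : 1 < d
    · set i1 : Fin d := ⟨1, h1⟩ with hi1
      have hne : i0 ≠ i1 := by simp [hi0, hi1, Fin.ext_iff]
      refine ⟨W i0 i0 - W i0 i1, W i0 i1, ?_⟩
      ext i j
      by_cases hij : i = j
      · subst hij
        simp [onesMat, Matrix.one_apply, hdiag i i0]
      · simp only [Matrix.add_apply, Matrix.smul_apply, Matrix.one_apply, if_neg hij, onesMat,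
          Matrix.of_apply, smul_eq_mul, mul_one, mul_zero, zero_add]
        exact hoff i j i0 i1 hij hne
    · -- d = 1
      have hd1 : d = 1 := le_antisymm (not_lt.mp h1) hd
      refine ⟨W i0 i0, 0, ?_⟩
      ext i j
      have hi : i = i0 := by subst hd1; exact Subsingleton.elim i i0
      have hj : j = i0 := by subst hd1; exact Subsingleton.elim j i0
      subst hi; subst hj
      simp [Matrix.one_apply]
  · rintro ⟨lam, gam, rfl⟩ π
    have hones1 : onesMat d * permMat d π = onesMat d := by
      ext i j
      have : ∀ k : Fin d, ((if k = π j then (1:ℝ) else 0)) = (if k = π j then (1:ℝ) else 0) :=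
        fun _ => rfl
      simp [Matrix.mul_apply, onesMat, permMat, eq_comm, Finset.sum_ite_eq']
    have hones2 : permMat d π * onesMat d = onesMat d := by
      ext i j
      have heq : ∀ k : Fin d, (i = π k) = (k = π.symm i) := by
        intro k; simp [Equiv.eq_symm_apply, eq_comm]
      simp [Matrix.mul_apply, onesMat, permMat, heq, Finset.sum_ite_eq']
    rw [Matrix.add_mul, Matrix.mul_add, Matrix.smul_mul, Matrix.smul_mul, Matrix.mul_smul,
      Matrix.mul_smul, Matrix.one_mul, Matrix.mul_one, hones1, hones2]
end

section
/- Let d ≥ 2 and let T : ℝ^{d×d} → ℝ^{d×d} be a linear map on d×d real matrices. Then T satisfies T(P X Qᵀ) = P T(X) Qᵀ for all d×d permutation matrices P, Q and all X ∈ ℝ^{d×d} (i.e., T is an exchangeable matrix layer, equivariant under independent permutations of rows and columns) if and only if there exist real numbers w₁, w₂, w₃, w₄ such that T(X) = w₁ X + w₂ 11ᵀ X + w₃ X 11ᵀ + w₄ 11ᵀ X 11ᵀ for all X ∈ ℝ^{d×d}. -/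
open Matrix

lemma permMat_mul_apply {d : ℕ} (π : Equiv.Perm (Fin d)) (M : Matrix (Fin d) (Fin d) ℝ)
    (i j : Fin d) : (permMat d π * M) i j = M (π.symm i) j := by
  simp only [mul_apply, permMat, of_apply]
  rw [Finset.sum_eq_single (π.symm i)]
  · simp
  · intro b _ hb
    rw [if_neg, zero_mul]
    intro h
    exact hb (by simp [h])
  · simp

lemma mul_permMatT_apply {d : ℕ} (τ : Equiv.Perm (Fin d)) (M : Matrix (Fin d) (Fin d) ℝ)
    (i j : Fin d) : (M * (permMat d τ)ᵀ) i j = M i (τ.symm j) := by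
  simp only [mul_apply, permMat, transpose_apply, of_apply]
  rw [Finset.sum_eq_single (τ.symm j)]
  · simp
  · intro b _ hb
    rw [if_neg, mul_zero]
    intro h
    exact hb (by simp [h])
  · simp

lemma conj_apply {d : ℕ} (π τ : Equiv.Perm (Fin d)) (M : Matrix (Fin d) (Fin d) ℝ)
    (i j : Fin d) : (permMat d π * M * (permMat d τ)ᵀ) i j = M (π.symm i) (τ.symm j) := by
  rw [mul_assoc, permMat_mul_apply, mul_permMatT_apply]

lemma onesMat_mul_apply {d : ℕ} (M : Matrix (Fin d) (Fin d) ℝ) (i j : Fin d) :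
    (onesMat d * M) i j = ∑ k, M k j := by
  simp [mul_apply, onesMat]

lemma mul_onesMat_apply {d : ℕ} (M : Matrix (Fin d) (Fin d) ℝ) (i j : Fin d) :
    (M * onesMat d) i j = ∑ k, M i k := by
  simp [mul_apply, onesMat]

lemma onesMat_mul_onesMat_apply {d : ℕ} (M : Matrix (Fin d) (Fin d) ℝ) (i j : Fin d) :
    (onesMat d * M * onesMat d) i j = ∑ k, ∑ l, M k l := by
  simp only [mul_onesMat_apply, onesMat_mul_apply]
  rw [Finset.sum_comm]

lemma perm_conj_std {d : ℕ} (π τ : Equiv.Perm (Fin d)) (i j : Fin d) :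
    permMat d π * Matrix.single i j (1:ℝ) * (permMat d τ)ᵀ
      = Matrix.single (π i) (τ j) (1:ℝ) := by
  ext a b
  rw [conj_apply]
  simp only [Matrix.single, of_apply]
  congr 1
  simp only [eq_iff_iff]
  constructor
  · rintro ⟨h1, h2⟩
    exact ⟨by rw [h1]; simp, by rw [h2]; simp⟩
  · rintro ⟨h1, h2⟩
    exact ⟨by rw [← h1]; simp, by rw [← h2]; simp⟩

lemma exists_perm_pair {d : ℕ} (hd : 2 ≤ d) (i k : Fin d) (h : k ≠ i) :
    ∃ π : Equiv.Perm (Fin d), π i = ⟨0, by omega⟩ ∧ π k = ⟨1, by omega⟩ := by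
  set i0 : Fin d := ⟨0, by omega⟩
  set i1 : Fin d := ⟨1, by omega⟩
  set σ := Equiv.swap i i0 with hσ
  have hne01 : i1 ≠ i0 := by
    intro hcontra
    have := congrArg Fin.val hcontra
    simp [i0, i1] at this
  have hσi : σ i = i0 := Equiv.swap_apply_left i i0
  have hσk : σ k ≠ i0 := by
    rw [← hσi]
    exact fun hc => h (σ.injective hc)
  refine ⟨σ.trans (Equiv.swap (σ k) i1), ?_, ?_⟩
  · simp only [Equiv.trans_apply, hσi]
    rw [Equiv.swap_apply_of_ne_of_ne (Ne.symm hσk) (Ne.symm hne01)]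
  · simp only [Equiv.trans_apply]
    exact Equiv.swap_apply_left _ _

lemma sum_decomp {d : ℕ} (X : Matrix (Fin d) (Fin d) ℝ) (k l : Fin d) (A B C D : ℝ) :
    ∑ i : Fin d, ∑ j : Fin d, (X i j * D
        + X i j * ((B - D) * (if k = i then (1:ℝ) else 0))
        + X i j * ((C - D) * (if l = j then (1:ℝ) else 0))
        + X i j * ((A - B - C + D) *
            ((if k = i then (1:ℝ) else 0) * (if l = j then (1:ℝ) else 0))))
      = (A - B - C + D) * X k l + (C - D) * ∑ a, X a l + (B - D) * ∑ a, X k a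
        + D * ∑ a, ∑ b, X a b := by
  have s1 : ∑ i : Fin d, ∑ j : Fin d, X i j * D = D * ∑ a : Fin d, ∑ b : Fin d, X a b := by
    simp [Finset.mul_sum, mul_comm]
  have s2 : ∑ i : Fin d, ∑ j : Fin d,
      X i j * ((B - D) * (if k = i then (1:ℝ) else 0))
        = (B - D) * ∑ a : Fin d, X k a := by
    rw [Finset.sum_eq_single k]
    · simp [Finset.sum_mul, Finset.mul_sum, mul_comm]
    · intro b _ hb
      apply Finset.sum_eq_zero
      intro j _
      rw [if_neg (fun h : k = b => hb h.symm)]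
      ring
    · simp
  have s3 : ∑ i : Fin d, ∑ j : Fin d,
      X i j * ((C - D) * (if l = j then (1:ℝ) else 0))
        = (C - D) * ∑ a : Fin d, X a l := by
    rw [Finset.mul_sum]
    refine Finset.sum_congr rfl fun i _ => ?_
    rw [Finset.sum_eq_single l]
    · simp [mul_comm]
    · intro b _ hb
      rw [if_neg (fun h : l = b => hb h.symm)]
      ring
    · simp
  have s4 : ∑ i : Fin d, ∑ j : Fin d,
      X i j * ((A - B - C + D) *
        ((if k = i then (1:ℝ) else 0) * (if l = j then (1:ℝ) else 0)))
        = (A - B - C + D) * X k l := by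
    rw [Finset.sum_eq_single k]
    · rw [Finset.sum_eq_single l]
      · simp [mul_comm]
      · intro b _ hb
        rw [if_neg (fun h : l = b => hb h.symm)]
        ring
      · simp
    · intro b _ hb
      apply Finset.sum_eq_zero
      intro j _
      rw [if_neg (fun h : k = b => hb h.symm)]
      ring
    · simp
  simp only [Finset.sum_add_distrib, s1, s2, s3, s4]
  ring

/-- For `d ≥ 2`, a linear map `T` on `d × d` real matrices is an exchangeable matrix layer,
i.e. `T (P X Qᵀ) = P (T X) Qᵀ` for all permutation matrices `P, Q`, iff it has the form
`T X = w₁ X + w₂ 11ᵀ X + w₃ X 11ᵀ + w₄ 11ᵀ X 11ᵀ` for some reals `w₁, w₂, w₃, w₄`. -/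
theorem stmt_2 (d : ℕ) (hd : 2 ≤ d)
    (T : Matrix (Fin d) (Fin d) ℝ →ₗ[ℝ] Matrix (Fin d) (Fin d) ℝ) :
    (∀ (π τ : Equiv.Perm (Fin d)) (X : Matrix (Fin d) (Fin d) ℝ),
        T (permMat d π * X * (permMat d τ)ᵀ) = permMat d π * T X * (permMat d τ)ᵀ) ↔
      ∃ w1 w2 w3 w4 : ℝ, ∀ X : Matrix (Fin d) (Fin d) ℝ,
        T X = w1 • X + w2 • (onesMat d * X) + w3 • (X * onesMat d)
            + w4 • (onesMat d * X * onesMat d) := by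
  constructor
  · intro hT
    set i0 : Fin d := ⟨0, by omega⟩ with hi0
    set i1 : Fin d := ⟨1, by omega⟩ with hi1
    have hinv : ∀ (π τ : Equiv.Perm (Fin d)) (i j k l : Fin d),
        T (Matrix.single i j (1:ℝ)) k l
          = T (Matrix.single (π i) (τ j) (1:ℝ)) (π k) (τ l) := by
      intro π τ i j k l
      have h1 := hT π τ (Matrix.single i j (1:ℝ))
      rw [perm_conj_std] at h1
      have h2 := congrFun (congrFun h1 (π k)) (τ l)
      rw [conj_apply, Equiv.symm_apply_apply, Equiv.symm_apply_apply] at h2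
      exact h2.symm
    set A := T (Matrix.single i0 i0 (1:ℝ)) i0 i0 with hA
    set B := T (Matrix.single i0 i0 (1:ℝ)) i0 i1 with hB
    set C := T (Matrix.single i0 i0 (1:ℝ)) i1 i0 with hC
    set D := T (Matrix.single i0 i0 (1:ℝ)) i1 i1 with hD
    have hclass : ∀ i j k l, T (Matrix.single i j (1:ℝ)) k l =
        (if k = i then (if l = j then A else B) else (if l = j then C else D)) := by
      intro i j k l
      obtain ⟨π, hπi, hπk⟩ : ∃ π : Equiv.Perm (Fin d),
          π i = i0 ∧ π k = (if k = i then i0 else i1) := by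
        by_cases hk : k = i
        · exact ⟨Equiv.swap i i0, Equiv.swap_apply_left i i0,
            by rw [if_pos hk, hk]; exact Equiv.swap_apply_left i i0⟩
        · obtain ⟨π, h1, h2⟩ := exists_perm_pair hd i k hk
          exact ⟨π, h1, by rw [if_neg hk]; exact h2⟩
      obtain ⟨τ, hτj, hτl⟩ : ∃ τ : Equiv.Perm (Fin d),
          τ j = i0 ∧ τ l = (if l = j then i0 else i1) := by
        by_cases hl : l = j
        · exact ⟨Equiv.swap j i0, Equiv.swap_apply_left j i0,
            by rw [if_pos hl, hl]; exact Equiv.swap_apply_left j i0⟩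
        · obtain ⟨τ, h1, h2⟩ := exists_perm_pair hd j l hl
          exact ⟨τ, h1, by rw [if_neg hl]; exact h2⟩
      rw [hinv π τ i j k l, hπi, hτj, hπk, hτl]
      by_cases hk : k = i <;> by_cases hl : l = j <;> simp [hk, hl] <;> rfl
    have hval : ∀ i j k l, T (Matrix.single i j (1:ℝ)) k l
        = D + (B - D) * (if k = i then (1:ℝ) else 0)
          + (C - D) * (if l = j then (1:ℝ) else 0)
          + (A - B - C + D) * ((if k = i then (1:ℝ) else 0) * (if l = j then (1:ℝ) else 0)) := by
      intro i j k l
      rw [hclass]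
      by_cases hk : k = i <;> by_cases hl : l = j <;> simp [hk, hl] <;> ring
    refine ⟨A - B - C + D, C - D, B - D, D, fun X => ?_⟩
    have hTX : T X = ∑ i : Fin d, ∑ j : Fin d, X i j • T (Matrix.single i j (1:ℝ)) := by
      conv_lhs => rw [matrix_eq_sum_single X]
      rw [map_sum]
      refine Finset.sum_congr rfl fun i _ => ?_
      rw [map_sum]
      refine Finset.sum_congr rfl fun j _ => ?_
      rw [show Matrix.single i j (X i j) = X i j • Matrix.single i j (1:ℝ) from by
        rw [smul_single, smul_eq_mul, mul_one], LinearMap.map_smul]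
    ext k l
    have lhs_eq : T X k l = ∑ i : Fin d, ∑ j : Fin d, X i j * T (Matrix.single i j (1:ℝ)) k l := by
      rw [hTX]
      simp [Matrix.sum_apply]
    rw [lhs_eq]
    simp only [Matrix.add_apply, Matrix.smul_apply, smul_eq_mul, onesMat_mul_apply,
      mul_onesMat_apply, onesMat_mul_onesMat_apply]
    have step : ∀ i j, X i j * T (Matrix.single i j (1:ℝ)) k l
        = X i j * D + X i j * ((B - D) * (if k = i then (1:ℝ) else 0))
          + X i j * ((C - D) * (if l = j then (1:ℝ) else 0))
          + X i j * ((A - B - C + D) *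
              ((if k = i then (1:ℝ) else 0) * (if l = j then (1:ℝ) else 0))) := by
      intro i j
      rw [hval]
      ring
    calc ∑ i : Fin d, ∑ j : Fin d, X i j * T (Matrix.single i j (1:ℝ)) k l
        = ∑ i : Fin d, ∑ j : Fin d, (X i j * D
            + X i j * ((B - D) * (if k = i then (1:ℝ) else 0))
            + X i j * ((C - D) * (if l = j then (1:ℝ) else 0))
            + X i j * ((A - B - C + D) *
                ((if k = i then (1:ℝ) else 0) * (if l = j then (1:ℝ) else 0)))) := by
          exact Finset.sum_congr rfl fun i _ => Finset.sum_congr rfl fun j _ => step i j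
      _ = (A - B - C + D) * X k l + (C - D) * ∑ a, X a l + (B - D) * ∑ a, X k a
            + D * ∑ a, ∑ b, X a b := sum_decomp X k l A B C D
      _ = (A - B - C + D) * X k l + (C - D) * ∑ a, X a l + (B - D) * ∑ a, X k a
            + D * ∑ b, ∑ a, X a b := by
          congr 1
          rw [Finset.sum_comm]
  · rintro ⟨w1, w2, w3, w4, hw⟩ π τ X
    rw [hw, hw]
    ext a b
    have r1 : ∀ f : Fin d → ℝ, ∑ k, f (π.symm k) = ∑ k, f k := fun f => Equiv.sum_comp π.symm f
    have r2 : ∀ f : Fin d → ℝ, ∑ k, f (τ.symm k) = ∑ k, f k := fun f => Equiv.sum_comp τ.symm f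
    rw [conj_apply]
    simp only [Matrix.add_apply, Matrix.smul_apply, smul_eq_mul, onesMat_mul_apply,
      mul_onesMat_apply, onesMat_mul_onesMat_apply, conj_apply]
    rw [r1 (fun k => X k (τ.symm b)), r2 (fun k => X (π.symm a) k)]
    congr 1
    congr 1
    calc ∑ x : Fin d, ∑ y : Fin d, X (π.symm y) (τ.symm x)
        = ∑ x : Fin d, ∑ k : Fin d, X k (τ.symm x) :=
          Finset.sum_congr rfl fun x _ => r1 (fun k => X k (τ.symm x))
      _ = ∑ x : Fin d, ∑ k : Fin d, X k x := r2 (fun x => ∑ k, X k x)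
end

section
/- Let d be a positive integer, w₁, w₂, w₃, w₄, b real numbers, and σ : ℝ → ℝ an arbitrary function. Define f : ℝ^{d×d} → ℝ^{d×d} by f(X) = σ(w₁ X + w₂ 11ᵀ X + w₃ X 11ᵀ + w₄ 11ᵀ X 11ᵀ + b 11ᵀ), with σ applied entrywise. Then f(P X Qᵀ) = P f(X) Qᵀ for all d×d permutation matrices P, Q and all X ∈ ℝ^{d×d}; in particular f(P X Pᵀ) = P f(X) Pᵀ for every permutation matrix P. -/
open Matrix

/-- The exchangeable matrix layer
`f(X) = σ(w₁ X + w₂ 11ᵀ X + w₃ X 11ᵀ + w₄ 11ᵀ X 11ᵀ + b 11ᵀ)` (with `σ` applied entrywise)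
satisfies `f (P X Qᵀ) = P (f X) Qᵀ` for all permutation matrices `P, Q`; in particular
`f (P X Pᵀ) = P (f X) Pᵀ` for every permutation matrix `P`. -/
theorem stmt_3 (d : ℕ) (hd : 0 < d) (w1 w2 w3 w4 b : ℝ) (σ : ℝ → ℝ)
    (f : Matrix (Fin d) (Fin d) ℝ → Matrix (Fin d) (Fin d) ℝ)
    (hf : ∀ X, f X = Matrix.of fun i j =>
        σ ((w1 • X + w2 • (onesMat d * X) + w3 • (X * onesMat d)
            + w4 • (onesMat d * X * onesMat d) + b • onesMat d) i j)) :
    (∀ (π τ : Equiv.Perm (Fin d)) (X : Matrix (Fin d) (Fin d) ℝ),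
        f (permMat d π * X * (permMat d τ)ᵀ) = permMat d π * f X * (permMat d τ)ᵀ) ∧
    (∀ (π : Equiv.Perm (Fin d)) (X : Matrix (Fin d) (Fin d) ℝ),
        f (permMat d π * X * (permMat d π)ᵀ) = permMat d π * f X * (permMat d π)ᵀ) := by
  have key : ∀ (π τ : Equiv.Perm (Fin d)) (X : Matrix (Fin d) (Fin d) ℝ),
      f (permMat d π * X * (permMat d τ)ᵀ) = permMat d π * f X * (permMat d τ)ᵀ := by
    intro π τ X
    set Y := permMat d π * X * (permMat d τ)ᵀ with hY
    funext i j
    rw [hf, hf, conj_apply]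
    simp only [Matrix.of_apply]
    congr 1
    have hYa : ∀ a b, Y a b = X (π.symm a) (τ.symm b) := fun a b => conj_apply π τ X a b
    have h2 : (onesMat d * Y) i j = (onesMat d * X) (π.symm i) (τ.symm j) := by
      simp only [Matrix.mul_apply, onesMat, Matrix.of_apply, one_mul]
      simp_rw [hYa]
      exact Equiv.sum_comp π.symm (fun k => X k (τ.symm j))
    have h3 : (Y * onesMat d) i j = (X * onesMat d) (π.symm i) (τ.symm j) := by
      simp only [Matrix.mul_apply, onesMat, Matrix.of_apply, mul_one]
      simp_rw [hYa]
      exact Equiv.sum_comp τ.symm (fun k => X (π.symm i) k)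
    have h4 : (onesMat d * Y * onesMat d) i j
        = (onesMat d * X * onesMat d) (π.symm i) (τ.symm j) := by
      simp only [Matrix.mul_apply, onesMat, Matrix.of_apply, one_mul, mul_one]
      simp_rw [hYa]
      rw [Equiv.sum_comp τ.symm (fun k => ∑ l, X (π.symm l) k)]
      refine Finset.sum_congr rfl fun k _ => ?_
      exact Equiv.sum_comp π.symm (fun l => X l k)
    simp only [Matrix.add_apply, Matrix.smul_apply, smul_eq_mul, hYa, h2, h3, h4]
    simp [onesMat]
  exact ⟨key, fun π X => key π π X⟩
end

section
/- Let (Ω, ℱ, ℙ) be a probability space, d a positive integer, C a d×d real matrix such that I − C is invertible, and ε₁, …, ε_d : Ω → ℝ square-integrable random variables. Suppose X₁, …, X_d : Ω → ℝ satisfy the linear structural equation model X_i(ω) = Σ_{k=1}^d C_{ik} X_k(ω) + ε_i(ω) for all i and all ω. Then each X_i is square-integrable and the covariance matrices Σ (with Σ_{ij} = Cov(X_i, X_j)) and Φ (with Φ_{ij} = Cov(ε_i, ε_j)) satisfy Σ = (I − C)^{-1} Φ ((I − C)^{-1})ᵀ. -/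
open Matrix MeasureTheory

/-- The covariance `Cov(U, V) = E[(U − E U)(V − E V)]` of two real random variables. -/
noncomputable def cov {Ω : Type*} [MeasureSpace Ω] (U V : Ω → ℝ) : ℝ :=
  ∫ ω, (U ω - ∫ ω', U ω') * (V ω - ∫ ω', V ω')

private lemma int_mul {Ω : Type*} [MeasureSpace Ω] {f g : Ω → ℝ}
    (hf : MemLp f 2) (hg : MemLp g 2) : Integrable (fun ω => f ω * g ω) := by
  have h : MemLp (f • g) 1 (volume : Measure Ω) :=
    hg.smul hf (hpqr := ⟨by simp [one_div, ENNReal.inv_two_add_inv_two]⟩)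
  exact memLp_one_iff_integrable.mp h

private lemma cov_sum {Ω : Type*} [MeasureSpace Ω] [IsProbabilityMeasure (volume : Measure Ω)]
    {d : ℕ} (a b : Fin d → ℝ) (f g : Fin d → Ω → ℝ)
    (hf : ∀ k, MemLp (f k) 2) (hg : ∀ k, MemLp (g k) 2) :
    cov (fun ω => ∑ k, a k * f k ω) (fun ω => ∑ l, b l * g l ω)
      = ∑ k, ∑ l, a k * b l * cov (f k) (g l) := by
  have hfi : ∀ k, Integrable (f k) := fun k => (hf k).integrable one_le_two
  have hgi : ∀ k, Integrable (g k) := fun k => (hg k).integrable one_le_two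
  have hU : (∫ ω, ∑ k, a k * f k ω) = ∑ k, a k * ∫ ω, f k ω := by
    rw [integral_finset_sum _ (fun k _ => (hfi k).const_mul (a k))]
    simp [integral_const_mul]
  have hV : (∫ ω, ∑ l, b l * g l ω) = ∑ l, b l * ∫ ω, g l ω := by
    rw [integral_finset_sum _ (fun l _ => (hgi l).const_mul (b l))]
    simp [integral_const_mul]
  have hfc : ∀ k, MemLp (fun ω => f k ω - ∫ ω', f k ω') 2 :=
    fun k => (hf k).sub (memLp_const _)
  have hgc : ∀ l, MemLp (fun ω => g l ω - ∫ ω', g l ω') 2 :=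
    fun l => (hg l).sub (memLp_const _)
  have hint : ∀ (k l : Fin d),
      Integrable (fun ω => a k * b l *
        ((f k ω - ∫ ω', f k ω') * (g l ω - ∫ ω', g l ω'))) :=
    fun k l => (int_mul (hfc k) (hgc l)).const_mul _
  unfold cov
  rw [hU, hV]
  have key : ∀ ω : Ω,
      ((∑ k, a k * f k ω) - ∑ k, a k * ∫ ω', f k ω') *
        ((∑ l, b l * g l ω) - ∑ l, b l * ∫ ω', g l ω')
      = ∑ k, ∑ l, a k * b l *
          ((f k ω - ∫ ω', f k ω') * (g l ω - ∫ ω', g l ω')) := by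
    intro ω
    rw [← Finset.sum_sub_distrib, ← Finset.sum_sub_distrib, Finset.sum_mul_sum]
    apply Finset.sum_congr rfl; intro k _
    apply Finset.sum_congr rfl; intro l _
    ring
  simp_rw [key]
  rw [integral_finset_sum _ (fun k _ => integrable_finset_sum _ (fun l _ => hint k l))]
  apply Finset.sum_congr rfl; intro k _
  rw [integral_finset_sum _ (fun l _ => hint k l)]
  apply Finset.sum_congr rfl; intro l _
  rw [integral_const_mul]

/-- For a linear structural equation model `X = C X + ε` with `I − C` invertible and
square-integrable noise `ε`, each `Xᵢ` is square-integrable and the covariance matrices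
satisfy `Σ = (I − C)⁻¹ Φ ((I − C)⁻¹)ᵀ`. -/
theorem stmt_7 {Ω : Type*} [MeasureSpace Ω] [IsProbabilityMeasure (volume : Measure Ω)]
    (d : ℕ) (hd : 0 < d) (C : Matrix (Fin d) (Fin d) ℝ)
    (hC : IsUnit (1 - C))
    (ε : Fin d → Ω → ℝ) (hε : ∀ i, MemLp (ε i) 2)
    (X : Fin d → Ω → ℝ)
    (hX : ∀ i ω, X i ω = (∑ k, C i k * X k ω) + ε i ω) :
    (∀ i, MemLp (X i) 2) ∧
    (Matrix.of fun i j => cov (X i) (X j))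
      = (1 - C)⁻¹ * (Matrix.of fun i j => cov (ε i) (ε j)) * ((1 - C)⁻¹)ᵀ := by
  set A := (1 - C)⁻¹ with hA
  have hdet : IsUnit (1 - C).det := (Matrix.isUnit_iff_isUnit_det _).mp hC
  have hinv : A * (1 - C) = 1 := Matrix.nonsing_inv_mul _ hdet
  have hεX : ∀ (j : Fin d) (ω : Ω), ε j ω = ∑ l, (1 - C) j l * X l ω := by
    intro j ω
    have : ∑ l, (1 - C) j l * X l ω
        = (∑ l, (if j = l then (1:ℝ) else 0) * X l ω) - ∑ l, C j l * X l ω := by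
      rw [← Finset.sum_sub_distrib]
      apply Finset.sum_congr rfl; intro l _
      simp [Matrix.sub_apply, Matrix.one_apply, sub_mul]
    rw [this]
    simp only [ite_mul, one_mul, zero_mul, Finset.sum_ite_eq, Finset.mem_univ, if_true]
    rw [hX j ω]; ring
  have hXε : ∀ (i : Fin d) (ω : Ω), X i ω = ∑ k, A i k * ε k ω := by
    intro i ω
    have : ∑ k, A i k * ε k ω = ∑ l, (∑ k, A i k * (1 - C) k l) * X l ω := by
      simp_rw [hεX, Finset.mul_sum, Finset.sum_mul]
      rw [Finset.sum_comm]
      simp [mul_assoc]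
    rw [this]
    have h1 : ∀ l, (∑ k, A i k * (1 - C) k l) = (1 : Matrix (Fin d) (Fin d) ℝ) i l := by
      intro l
      rw [← Matrix.mul_apply, hinv]
    simp_rw [h1]
    simp [Matrix.one_apply]
  have hXmem : ∀ i, MemLp (X i) 2 := by
    intro i
    have hfe : X i = fun ω => ∑ k, A i k * ε k ω := funext (hXε i)
    rw [hfe]
    exact memLp_finset_sum _ (fun k _ => (hε k).const_mul (A i k))
  refine ⟨hXmem, ?_⟩
  ext i j
  have hcov : cov (X i) (X j) = ∑ k, ∑ l, A i k * A j l * cov (ε k) (ε l) := by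
    have hi : X i = fun ω => ∑ k, A i k * ε k ω := funext (hXε i)
    have hj : X j = fun ω => ∑ k, A j k * ε k ω := funext (hXε j)
    rw [hi, hj]
    exact cov_sum _ _ _ _ hε hε
  simp only [Matrix.of_apply, Matrix.mul_apply, Matrix.transpose_apply, hcov]
  rw [Finset.sum_comm]
  apply Finset.sum_congr rfl; intro l _
  rw [Finset.sum_mul]
  apply Finset.sum_congr rfl; intro k _
  ring
end
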